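/- Let p be a prime, G a finite group, H a subgroup of G, and P a p-subgroup of G with P ≤ H. Assume: (i) any two G-conjugate elementary abelian p-subgroups of P are H-conjugate, i.e. for all elementary abelian p-subgroups E₁, E₂ ≤ P and all g ∈ G with gE₁g⁻¹ = E₂ there exists h ∈ H with hE₁h⁻¹ = E₂; and (ii) for every elementary abelian p-subgroup E ≤ P, every automorphism of E induced by G-conjugation is induced by H-conjugation, i.e. for every g ∈ G with gEg⁻¹ = E there exists h ∈ H with hEh⁻¹ = E and hxh⁻¹ = gxg⁻¹ for all x ∈ E. Then for all elementary abelian p-subgroups E₁, E₂ ≤ P and every g ∈ G with gE₁g⁻¹ ≤ E₂, there exists h ∈ H such that hxh⁻¹ = gxg⁻¹ for all x ∈ E₁. -/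
import Mathlib


/-!
The concluding group-theoretic step in the paper's proof of Theorem 1.2: if `G`-conjugacy
of elementary abelian `p`-subgroups of `P` agrees with `H`-conjugacy, and every
`G`-automorphism of an elementary abelian `p`-subgroup of `P` is an `H`-automorphism,
then every `G`-morphism between elementary abelian `p`-subgroups of `P` is realized by
an element of `H`.
-/

/-- A subgroup `E` of `G` is elementary abelian (for the prime `p`) if it is abelian and
every element `x ∈ E` satisfies `x ^ p = 1`. -/
def Subgroup.IsElementaryAbelian {G : Type*} [Group G] (p : ℕ) (E : Subgroup G) : Prop :=
  (∀ x ∈ E, ∀ y ∈ E, x * y = y * x) ∧ (∀ x ∈ E, x ^ p = 1)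

/-- The conjugate `gQg⁻¹` of a subgroup `Q` by an element `g`. -/
def Subgroup.conjugateBy {G : Type*} [Group G] (g : G) (Q : Subgroup G) : Subgroup G :=
  Q.map (MulAut.conj g).toMonoidHom

/-- Let `p` be a prime, `G` a finite group, `H ≤ G` a subgroup and
`P ≤ H` a `p`-subgroup of `G`.  Assume (i) any two `G`-conjugate elementary abelian
`p`-subgroups of `P` are `H`-conjugate, and (ii) for every elementary abelian
`p`-subgroup `E ≤ P`, every automorphism of `E` induced by `G`-conjugation is induced by
`H`-conjugation.  Then for all elementary abelian `p`-subgroups `E₁, E₂ ≤ P` and every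
`g ∈ G` with `gE₁g⁻¹ ≤ E₂` there is `h ∈ H` with `hxh⁻¹ = gxg⁻¹` for all `x ∈ E₁`. -/
theorem homs_eq_of_conj_classes_and_auts_eq
    (p : ℕ) [Fact p.Prime]
    (G : Type*) [Group G] [Finite G] (H : Subgroup G)
    (P : Subgroup G) (hP : IsPGroup p P) (hPH : P ≤ H)
    (hconj : ∀ E₁ E₂ : Subgroup G, E₁ ≤ P → E₂ ≤ P →
      E₁.IsElementaryAbelian p → E₂.IsElementaryAbelian p →
      ∀ g : G, Subgroup.conjugateBy g E₁ = E₂ →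
        ∃ h ∈ H, Subgroup.conjugateBy h E₁ = E₂)
    (haut : ∀ E : Subgroup G, E ≤ P → E.IsElementaryAbelian p →
      ∀ g : G, Subgroup.conjugateBy g E = E →
        ∃ h ∈ H, Subgroup.conjugateBy h E = E ∧ ∀ x ∈ E, h * x * h⁻¹ = g * x * g⁻¹) :
    ∀ E₁ E₂ : Subgroup G, E₁ ≤ P → E₂ ≤ P →
      E₁.IsElementaryAbelian p → E₂.IsElementaryAbelian p →
      ∀ g : G, (∀ x ∈ E₁, g * x * g⁻¹ ∈ E₂) →
        ∃ h ∈ H, ∀ x ∈ E₁, h * x * h⁻¹ = g * x * g⁻¹ := by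
  intro E₁ E₂ hE₁P hE₂P hea₁ hea₂ g hg
  -- E₁' = g E₁ g⁻¹
  set E₁' := Subgroup.conjugateBy g E₁ with hE₁'def
  have mem_conj : ∀ (a : G) (Q : Subgroup G) (x : G),
      x ∈ Subgroup.conjugateBy a Q ↔ ∃ y ∈ Q, a * y * a⁻¹ = x := by
    intro a Q x
    simp [Subgroup.conjugateBy, Subgroup.mem_map, MulAut.conj_apply, mul_assoc]
  have hE₁'le : E₁' ≤ E₂ := by
    intro x hx
    rw [mem_conj] at hx
    obtain ⟨y, hy, rfl⟩ := hx
    exact hg y hy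
  have hE₁'P : E₁' ≤ P := hE₁'le.trans hE₂P
  have hea₁' : E₁'.IsElementaryAbelian p := by
    constructor
    · intro x hx y hy
      exact hea₂.1 x (hE₁'le hx) y (hE₁'le hy)
    · intro x hx
      exact hea₂.2 x (hE₁'le hx)
  obtain ⟨h₁, hh₁H, hh₁⟩ := hconj E₁ E₁' hE₁P hE₁'P hea₁ hea₁' g rfl
  have hfix : Subgroup.conjugateBy (h₁⁻¹ * g) E₁ = E₁ := by
    ext x
    rw [mem_conj]
    constructor
    · rintro ⟨y, hy, rfl⟩
      have : g * y * g⁻¹ ∈ E₁' := by rw [mem_conj]; exact ⟨y, hy, rfl⟩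
      rw [← hh₁, mem_conj] at this
      obtain ⟨z, hz, hz'⟩ := this
      have : h₁⁻¹ * g * y * (h₁⁻¹ * g)⁻¹ = z := by
        rw [mul_inv_rev, inv_inv]
        have := congrArg (fun w => h₁⁻¹ * w * h₁) hz'
        simpa [mul_assoc] using this.symm
      rw [this]; exact hz
    · intro hx
      have : h₁ * x * h₁⁻¹ ∈ E₁' := hh₁ ▸ (by rw [mem_conj]; exact ⟨x, hx, rfl⟩)
      rw [mem_conj] at this
      obtain ⟨y, hy, hy'⟩ := this
      refine ⟨y, hy, ?_⟩
      have := congrArg (fun w => h₁⁻¹ * w * h₁) hy'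
      simpa [mul_assoc, mul_inv_rev] using this
  obtain ⟨h₂, hh₂H, -, hh₂⟩ := haut E₁ hE₁P hea₁ (h₁⁻¹ * g) hfix
  refine ⟨h₁ * h₂, H.mul_mem hh₁H hh₂H, ?_⟩
  intro x hx
  have := hh₂ x hx
  have h2 := congrArg (fun w => h₁ * w * h₁⁻¹) this
  simp only [mul_inv_rev, inv_inv] at h2 ⊢
  calc h₁ * h₂ * x * (h₂⁻¹ * h₁⁻¹)
      = h₁ * (h₂ * x * h₂⁻¹) * h₁⁻¹ := by group
    _ = h₁ * (h₁⁻¹ * g * x * (h₁⁻¹ * g)⁻¹) * h₁⁻¹ := by rw [this]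
    _ = g * x * g⁻¹ := by group
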